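/- Let α_A, α_B > 0, δ = α_A + α_B, Q_A^o = α_A/δ, X_A^o = 2Q_A^o, and let X̄_A satisfy X_A^o < X̄_A < 1. Set η_A = (2 - X̄_A)/X̄_A and π_A = δ·(1 - (1 + η_A)·Q_A^o)/(1 + η_A). Then: (i) η_A > 1; (ii) π_A = (δ/2)·X̄_A - α_A > 0; (iii) π_A = α_A·(X̄_A - X_A^o)/X_A^o; (iv) with φ_A·η_A = 1 the quantities Q_A^dom = Q_A^exp = Q_A^o + π_A/δ = X̄_A/2, so total production X_A = 2Q_A^o + 2π_A/δ equals X̄_A; and (v) the binding certificate condition η_A·(Q_A^o + π_A/δ) = 1 - Q_A^o - π_A/δ holds. -/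

import Mathlib

/-- Properties of the TIC Agreement (Proposition 6): the chosen export credit factor
`η_A` exceeds one, the resulting certificate price is positive and implements
country A's strategic production target in a conditionally efficient manner. -/
theorem stmt_6 (αA αB δ QAo XAo XbarA ηA φA πA : ℝ)
    (hA : 0 < αA) (hB : 0 < αB) (hδ : δ = αA + αB)
    (hQAo : QAo = αA / δ) (hXAo : XAo = 2 * QAo)
    (hXlo : XAo < XbarA) (hXhi : XbarA < 1)
    (hη : ηA = (2 - XbarA) / XbarA)
    (hφ : φA * ηA = 1)
    (hπ : πA = δ * (1 - (1 + ηA) * QAo) / (1 + ηA)) :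
    1 < ηA ∧
    (πA = (δ / 2) * XbarA - αA ∧ 0 < πA) ∧
    πA = αA * (XbarA - XAo) / XAo ∧
    (QAo + πA / δ = XbarA / 2 ∧ 2 * QAo + 2 * πA / δ = XbarA) ∧
    ηA * (QAo + πA / δ) = 1 - QAo - πA / δ := by
  have hδ0 : 0 < δ := by rw [hδ]; linarith
  have hQ0 : 0 < QAo := by rw [hQAo]; positivity
  have hX0 : 0 < XbarA := by rw [hXAo] at hXlo; linarith
  have hXAo0 : 0 < XAo := by rw [hXAo]; linarith
  have h1η : 1 + ηA = 2 / XbarA := by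
    rw [hη]; field_simp; ring
  have hη0 : 0 < 1 + ηA := by rw [h1η]; positivity
  have hη1 : 1 < ηA := by
    have : 2 / XbarA > 2 := by
      rw [gt_iff_lt, lt_div_iff₀ hX0]; linarith
    linarith [h1η ▸ this]
  have hπ2 : πA = (δ / 2) * XbarA - αA := by
    rw [hπ, h1η, hQAo]
    field_simp
  have hπpos : 0 < πA := by
    rw [hπ2]
    have : XAo * δ = 2 * αA := by rw [hXAo, hQAo]; field_simp
    nlinarith
  refine ⟨hη1, ⟨hπ2, hπpos⟩, ?_, ⟨?_, ?_⟩, ?_⟩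
  · rw [hπ2, hXAo, hQAo]; field_simp
  · rw [hπ2, hQAo]; field_simp; ring
  · rw [hπ2, hQAo]; field_simp; ring
  · have hq : QAo + πA / δ = XbarA / 2 := by rw [hπ2, hQAo]; field_simp; ring
    have h2 : 1 - QAo - πA / δ = 1 - XbarA / 2 := by linarith
    rw [hq, h2, hη]; field_simp
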